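/- arXiv:1311.6250 — 2 statements merged into one kernel-verified Lean document; each statement's English description precedes it below -/
import Mathlib

section
/- The TPTL formula x.F(b ∧ F(c ∧ x ≤ 2)) is not definable in MTL. -/
/-- Integers extended with `-∞` (`⊥`) and `+∞` (`⊤`), used as interval endpoints. -/
abbrev EIntB := WithBot (WithTop ℤ)

def EIntB.ofInt (n : ℤ) : EIntB := ((n : WithTop ℤ) : EIntB)

/-- An interval of integers, given by two (possibly infinite) endpoints and
openness flags. -/
structure Iv where
  lo : EIntB
  hi : EIntB
  loOpen : Bool
  hiOpen : Bool

/-- Membership of an integer in an interval. -/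
def Iv.mem (I : Iv) (d : ℤ) : Prop :=
  (if I.loOpen then I.lo < EIntB.ofInt d else I.lo ≤ EIntB.ofInt d) ∧
  (if I.hiOpen then EIntB.ofInt d < I.hi else EIntB.ofInt d ≤ I.hi)

/-- The interval `(-∞, +∞)`. -/
def Iv.univ : Iv := ⟨⊥, ⊤, true, true⟩

/-- The singleton interval `[n, n]`. -/
def Iv.pt (n : ℤ) : Iv := ⟨EIntB.ofInt n, EIntB.ofInt n, false, false⟩

/-- A data word: an infinite sequence of pairs of a set of propositions and a
natural number data value. -/
abbrev DataWord (P : Type) := ℕ → (Set P) × ℕ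

/-- Syntax of MTL: atoms, negation, conjunction, and interval-constrained
strict until. -/
inductive MTL (P : Type) where
  | atom : P → MTL P
  | neg  : MTL P → MTL P
  | and  : MTL P → MTL P → MTL P
  | untl : MTL P → Iv → MTL P → MTL P

/-- Satisfaction of an MTL formula at position `i` of data word `w`. -/
def MTL.sat {P : Type} (w : DataWord P) : ℕ → MTL P → Prop
  | i, .atom p => p ∈ (w i).1
  | i, .neg φ => ¬ MTL.sat w i φ
  | i, .and φ ψ => MTL.sat w i φ ∧ MTL.sat w i ψ
  | i, .untl φ I ψ => ∃ j, i < j ∧ MTL.sat w j ψ ∧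
      I.mem (((w j).2 : ℤ) - ((w i).2 : ℤ)) ∧
      ∀ k, i < k → k < j → MTL.sat w k φ

/-- A data word satisfies an MTL formula if it holds at position `0`. -/
def MTL.models {P : Type} (w : DataWord P) (φ : MTL P) : Prop := MTL.sat w 0 φ

/-- The until rank of an MTL formula. -/
def MTL.urk {P : Type} : MTL P → ℕ
  | .atom _ => 0
  | .neg φ => φ.urk
  | .and φ ψ => max φ.urk ψ.urk
  | .untl φ _ ψ => max φ.urk ψ.urk + 1

/-- All interval endpoints of until operators in the formula lie in `S`. -/
def MTL.endpointsIn {P : Type} : MTL P → Set EIntB → Prop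
  | .atom _, _ => True
  | .neg φ, S => φ.endpointsIn S
  | .and φ ψ, S => φ.endpointsIn S ∧ ψ.endpointsIn S
  | .untl φ I ψ, S => I.lo ∈ S ∧ I.hi ∈ S ∧ φ.endpointsIn S ∧ ψ.endpointsIn S

/-- Syntax of TPTL: atoms, register constraints, negation, conjunction,
strict until, and the freeze quantifier. -/
inductive TPTL (P V : Type) where
  | atom : P → TPTL P V
  | cstr : V → Iv → TPTL P V
  | neg : TPTL P V → TPTL P V
  | and : TPTL P V → TPTL P V → TPTL P V
  | untl : TPTL P V → TPTL P V → TPTL P V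
  | freeze : V → TPTL P V → TPTL P V

/-- Satisfaction of a TPTL formula at position `i` of data word `w` under the
register valuation `ν`. -/
def TPTL.sat {P V : Type} [DecidableEq V] (w : DataWord P) :
    ℕ → (V → ℕ) → TPTL P V → Prop
  | i, _, .atom p => p ∈ (w i).1
  | i, ν, .cstr x I => I.mem (((w i).2 : ℤ) - (ν x : ℤ))
  | i, ν, .neg φ => ¬ TPTL.sat w i ν φ
  | i, ν, .and φ ψ => TPTL.sat w i ν φ ∧ TPTL.sat w i ν ψ
  | i, ν, .untl φ ψ => ∃ j, i < j ∧ TPTL.sat w j ν ψ ∧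
      ∀ k, i < k → k < j → TPTL.sat w k ν φ
  | i, ν, .freeze x φ => TPTL.sat w i (Function.update ν x (w i).2) φ

/-- A data word satisfies a TPTL formula if it holds at position `0` under the
valuation mapping every register to the first data value. -/
def TPTL.models {P V : Type} [DecidableEq V] (w : DataWord P) (φ : TPTL P V) : Prop :=
  TPTL.sat w 0 (fun _ => (w 0).2) φ

/-- The until rank of a TPTL formula. -/
def TPTL.urk {P V : Type} : TPTL P V → ℕ
  | .atom _ => 0
  | .cstr _ _ => 0
  | .neg φ => φ.urk
  | .and φ ψ => max φ.urk ψ.urk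
  | .untl φ ψ => max φ.urk ψ.urk + 1
  | .freeze _ φ => φ.urk

/-- All register constraints in the formula are equality tests `x ∈ [0,0]`. -/
def TPTL.eqOnly {P V : Type} : TPTL P V → Prop
  | .atom _ => True
  | .cstr _ I => I = Iv.pt 0
  | .neg φ => φ.eqOnly
  | .and φ ψ => φ.eqOnly ∧ ψ.eqOnly
  | .untl φ ψ => φ.eqOnly ∧ ψ.eqOnly
  | .freeze _ φ => φ.eqOnly

/-- All endpoints of intervals in register constraints lie in `S`. -/
def TPTL.cstrIn {P V : Type} : TPTL P V → Set EIntB → Prop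
  | .atom _, _ => True
  | .cstr _ I, S => I.lo ∈ S ∧ I.hi ∈ S
  | .neg φ, S => φ.cstrIn S
  | .and φ ψ, S => φ.cstrIn S ∧ ψ.cstrIn S
  | .untl φ ψ, S => φ.cstrIn S ∧ ψ.cstrIn S
  | .freeze _ φ, S => φ.cstrIn S

/-- A TPTL truth constant: `x ∈ (-∞, +∞)`. -/
def ttu : TPTL Bool Unit := .cstr () Iv.univ

/-- The eventually operator `F φ := true U φ` (strict). -/
def Fu (φ : TPTL Bool Unit) : TPTL Bool Unit := .untl ttu φ

/-- The interval `(-∞, 2]`. -/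
def le2 : Iv := ⟨⊥, EIntB.ofInt 2, true, false⟩

/-- The formula `x.F (b ∧ F (c ∧ x ≤ 2))`, with `b` the atom `true` and `c`
the atom `false` of `Bool`. -/
def xFbFc : TPTL Bool Unit :=
  .freeze () (Fu (.and (.atom true) (Fu (.and (.atom false) (.cstr () le2)))))
namespace ND

/-- magnitude of an endpoint (`0` for the infinities) -/
def ebnd : EIntB → ℕ
  | ⊥ => 0
  | some e =>
    match e with
    | ⊤ => 0
    | (n : ℤ) => n.natAbs

lemma ebnd_coe (n : ℤ) : ebnd (EIntB.ofInt n) = n.natAbs := rfl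

lemma cmpLo (e : EIntB) (o : Bool) {B : ℕ} (hb : ebnd e ≤ B) {x y : ℤ}
    (h : ((B:ℤ) < x ∧ (B:ℤ) < y) ∨ (x < -(B:ℤ) ∧ y < -(B:ℤ))) :
    ((if o then e < EIntB.ofInt x else e ≤ EIntB.ofInt x) ↔
     (if o then e < EIntB.ofInt y else e ≤ EIntB.ofInt y)) := by
  induction e using WithBot.recBotCoe with
  | bot => cases o <;> simp [EIntB.ofInt]
  | coe a =>
    induction a using WithTop.recTopCoe with
    | top =>
      cases o <;> simp only [if_true, if_false, Bool.false_eq_true] <;>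
      constructor <;> intro hc <;> exfalso
      · exact WithTop.not_top_le_coe x (WithBot.coe_le_coe.mp hc)
      · exact WithTop.not_top_le_coe y (WithBot.coe_le_coe.mp hc)
      · exact not_top_lt (WithBot.coe_lt_coe.mp hc)
      · exact not_top_lt (WithBot.coe_lt_coe.mp hc)
    | coe n =>
      have hn : n.natAbs ≤ B := hb
      cases o <;>
        simp only [if_true, if_false, Bool.false_eq_true, EIntB.ofInt,
          WithBot.coe_le_coe, WithBot.coe_lt_coe, WithTop.coe_le_coe, WithTop.coe_lt_coe] <;>
        rcases h with ⟨h1, h2⟩ | ⟨h1, h2⟩ <;> omega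

lemma cmpHi (e : EIntB) (o : Bool) {B : ℕ} (hb : ebnd e ≤ B) {x y : ℤ}
    (h : ((B:ℤ) < x ∧ (B:ℤ) < y) ∨ (x < -(B:ℤ) ∧ y < -(B:ℤ))) :
    ((if o then EIntB.ofInt x < e else EIntB.ofInt x ≤ e) ↔
     (if o then EIntB.ofInt y < e else EIntB.ofInt y ≤ e)) := by
  induction e using WithBot.recBotCoe with
  | bot =>
    cases o <;> simp only [if_true, if_false, Bool.false_eq_true] <;>
    constructor <;> intro hc <;> exfalso <;>
    simp [EIntB.ofInt] at hc
  | coe a =>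
    induction a using WithTop.recTopCoe with
    | top =>
      cases o <;> simp only [if_true, if_false, Bool.false_eq_true] <;>
      constructor <;> intro _
      · exact WithBot.coe_le_coe.mpr le_top
      · exact WithBot.coe_le_coe.mpr le_top
      · exact WithBot.coe_lt_coe.mpr (WithTop.coe_lt_top y)
      · exact WithBot.coe_lt_coe.mpr (WithTop.coe_lt_top x)
    | coe n =>
      have hn : n.natAbs ≤ B := hb
      cases o <;>
        simp only [if_true, if_false, Bool.false_eq_true, EIntB.ofInt,
          WithBot.coe_le_coe, WithBot.coe_lt_coe, WithTop.coe_le_coe, WithTop.coe_lt_coe] <;>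
        rcases h with ⟨h1, h2⟩ | ⟨h1, h2⟩ <;> omega

lemma mem_congr (I : Iv) {B : ℕ} (hlo : ebnd I.lo ≤ B) (hhi : ebnd I.hi ≤ B) {x y : ℤ}
    (h : x = y ∨ ((B:ℤ) < x ∧ (B:ℤ) < y) ∨ (x < -(B:ℤ) ∧ y < -(B:ℤ))) :
    I.mem x ↔ I.mem y := by
  rcases h with rfl | h
  · rfl
  · exact and_congr (cmpLo I.lo I.loOpen hlo h) (cmpHi I.hi I.hiOpen hhi h)

end ND
namespace ND

/-- endpoint magnitude bound of an MTL formula -/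
def mbnd : MTL Bool → ℕ
  | .atom _ => 0
  | .neg φ => mbnd φ
  | .and φ ψ => max (mbnd φ) (mbnd ψ)
  | .untl φ I ψ => max (max (ebnd I.lo) (ebnd I.hi)) (max (mbnd φ) (mbnd ψ))

/-- data values of the word `u` -/
def du (W : ℕ) : ℕ → ℕ := fun i =>
  if i = 0 then 4*W else if i % 2 = 0 then 0 else if i = 1 then W else ((i+9)/2)*W

/-- data values of the word `v` -/
def dv (W : ℕ) : ℕ → ℕ := fun i =>
  if i ≤ 2 then du W i else if i = 3 then 2*W else du W (i-2)

/-- propositions (same pattern for both words) -/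
def pw : ℕ → Set Bool := fun i =>
  if i = 0 then ∅ else if i % 2 = 0 then {true} else {false}

def uu (W : ℕ) : DataWord Bool := fun i => (pw i, du W i)
def vv (W : ℕ) : DataWord Bool := fun i => (pw i, dv W i)

/-- the matching relation between positions of `u` and positions of `v` -/
def Rel (i j : ℕ) : Prop := (i = 0 ↔ j = 0) ∧ i % 2 = j % 2

-- value lemmas
lemma du0 (W : ℕ) : du W 0 = 4*W := rfl
lemma du1 (W : ℕ) : du W 1 = W := rfl
lemma duE (W : ℕ) {i : ℕ} (h : i % 2 = 0) (h0 : i ≠ 0) : du W i = 0 := by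
  simp [du, h, h0]
lemma duO (W : ℕ) {i : ℕ} (h : i % 2 = 1) (h1 : i ≠ 1) : du W i = ((i+9)/2)*W := by
  have : i ≠ 0 := by omega
  simp [du, h, this, h1]
lemma dv0 (W : ℕ) : dv W 0 = 4*W := rfl
lemma dv1 (W : ℕ) : dv W 1 = W := rfl
lemma dv3 (W : ℕ) : dv W 3 = 2*W := rfl
lemma dv5 (W : ℕ) : dv W 5 = 6*W := by
  show du W 3 = 6*W
  rw [duO W (by norm_num) (by norm_num)]
lemma dvE (W : ℕ) {j : ℕ} (h : j % 2 = 0) (h0 : j ≠ 0) : dv W j = 0 := by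
  unfold dv
  rcases Nat.lt_or_ge j 3 with hj | hj
  · have : j = 2 := by omega
    subst this; simp [duE]
  · have h4 : j ≥ 4 := by omega
    have : ¬ (j ≤ 2) := by omega
    simp [this, show j ≠ 3 by omega]
    exact duE W (by omega) (by omega)
lemma dvO (W : ℕ) {j : ℕ} (h : j % 2 = 1) (h1 : j ≠ 1) (h3 : j ≠ 3) :
    dv W j = ((j+7)/2)*W := by
  have h5 : j ≥ 5 := by omega
  unfold dv
  simp [show ¬ (j ≤ 2) by omega, h3]
  rw [duO W (by omega) (by omega)]
  congr 1
  omega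

lemma du_odd_lb (W : ℕ) {i : ℕ} (h : i % 2 = 1) : W ≤ du W i := by
  rcases eq_or_ne i 1 with rfl | h1
  · simp [du1]
  · rw [duO W h h1]
    have : 1 ≤ (i+9)/2 := by omega
    nlinarith
lemma dv_odd_lb (W : ℕ) {j : ℕ} (h : j % 2 = 1) : W ≤ dv W j := by
  rcases eq_or_ne j 1 with rfl | h1
  · simp [dv1]
  · rcases eq_or_ne j 3 with rfl | h3
    · rw [dv3]; omega
    · rw [dvO W h h1 h3]
      have : 1 ≤ (j+7)/2 := by omega
      nlinarith
lemma du_odd_big (W : ℕ) {i : ℕ} (h : i % 2 = 1) (h1 : i ≠ 1) : 6*W ≤ du W i := by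
  rw [duO W h h1]
  have : 6 ≤ (i+9)/2 := by omega
  exact Nat.mul_le_mul_right W this
lemma dv_odd_big (W : ℕ) {j : ℕ} (h : j % 2 = 1) (h1 : j ≠ 1) (h3 : j ≠ 3) :
    6*W ≤ dv W j := by
  rw [dvO W h h1 h3]
  have : 6 ≤ (j+7)/2 := by omega
  exact Nat.mul_le_mul_right W this
lemma du_odd_mono (W : ℕ) {i k : ℕ} (hi : i % 2 = 1) (hk : k % 2 = 1) (hik : i < k) :
    du W i + W ≤ du W k := by
  rcases eq_or_ne i 1 with rfl | h1
  · rw [du1]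
    have := du_odd_big W hk (by omega)
    omega
  · rw [duO W hi h1, duO W hk (by omega)]
    have h2 : (i+9)/2 + 1 ≤ (k+9)/2 := by omega
    calc (i+9)/2 * W + W = ((i+9)/2 + 1) * W := by ring
    _ ≤ (k+9)/2 * W := Nat.mul_le_mul_right W h2
lemma dv_odd_mono (W : ℕ) {j k : ℕ} (hj : j % 2 = 1) (hk : k % 2 = 1) (hjk : j < k) :
    dv W j + W ≤ dv W k := by
  rcases eq_or_ne j 1 with rfl | h1
  · rw [dv1]
    rcases eq_or_ne k 3 with rfl | h3
    · rw [dv3]; omega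
    · have := dv_odd_big W hk (by omega) h3
      omega
  · rcases eq_or_ne j 3 with rfl | h3
    · rw [dv3]
      have := dv_odd_big W hk (by omega) (by omega)
      omega
    · rw [dvO W hj h1 h3, dvO W hk (by omega) (by omega)]
      have h2 : (j+7)/2 + 1 ≤ (k+7)/2 := by omega
      calc (j+7)/2 * W + W = ((j+7)/2 + 1) * W := by ring
      _ ≤ (k+7)/2 * W := Nat.mul_le_mul_right W h2

lemma pw_eq {i j : ℕ} (h : Rel i j) : pw i = pw j := by
  obtain ⟨h0, hp⟩ := h
  unfold pw
  rcases eq_or_ne i 0 with rfl | hi0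
  · simp [h0.mp rfl]
  · have hj0 : j ≠ 0 := fun hj => hi0 (h0.mpr hj)
    simp only [hi0, hj0, if_false, hp]

end ND
namespace ND

lemma key (B W : ℕ) (hW : B < W) :
    ∀ φ : MTL Bool, mbnd φ ≤ B → ∀ i j, Rel i j →
      (MTL.sat (uu W) i φ ↔ MTL.sat (vv W) j φ) := by
  intro φ
  induction φ with
  | atom p =>
    intro _ i j hij
    simp only [MTL.sat, uu, vv, pw_eq hij]
  | neg ψ ih =>
    intro hb i j hij
    simp only [MTL.sat]
    exact not_congr (ih hb i j hij)
  | and ψ χ ihψ ihχ =>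
    intro hb i j hij
    simp only [mbnd, max_le_iff] at hb
    simp only [MTL.sat]
    exact and_congr (ihψ hb.1 i j hij) (ihχ hb.2 i j hij)
  | untl g I h ihg ihh =>
    intro hb i j hij
    simp only [mbnd, max_le_iff] at hb
    obtain ⟨⟨hlo, hhi⟩, hbg, hbh⟩ := hb
    simp only [MTL.sat, uu, vv]
    constructor
    · rintro ⟨k, hik, hkh, hmem, hint⟩
      by_cases hi0 : i = 0
      · have hj0 : j = 0 := hij.1.mp hi0
        subst hi0; subst hj0
        rcases Nat.mod_two_eq_zero_or_one k with hk | hk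
        · -- witness is a b-position, answer 2
          have hk0 : k ≠ 0 := by omega
          refine ⟨2, by omega, (ihh hbh k 2 (by unfold Rel; omega)).mp hkh, ?_, ?_⟩
          · have e1 : du W k = 0 := duE W hk hk0
            have e2 : dv W 2 = 0 := dvE W (by omega) (by omega)
            have hval : (dv W 2 : ℤ) - (dv W 0 : ℤ) = (du W k : ℤ) - (du W 0 : ℤ) := by
              rw [e1, e2, dv0, du0]
            rw [hval]; exact hmem
          · intro m h1 h2
            have : m = 1 := by omega
            subst this
            exact (ihg hbg 1 1 (by unfold Rel; omega)).mp (hint 1 (by omega) (by omega))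
        · rcases eq_or_ne k 1 with rfl | hk1
          · -- witness is position 1, answer 1
            refine ⟨1, by omega, (ihh hbh 1 1 (by unfold Rel; omega)).mp hkh, ?_, ?_⟩
            · have hval : (dv W 1 : ℤ) - (dv W 0 : ℤ) = (du W 1 : ℤ) - (du W 0 : ℤ) := by
                rw [dv1, dv0, du1, du0]
              rw [hval]; exact hmem
            · intro m h1 h2; exact absurd h2 (by omega)
          · -- witness is a high c-position, answer 5
            have hk3 : 3 ≤ k := by omega
            refine ⟨5, by omega, (ihh hbh k 5 (by unfold Rel; omega)).mp hkh, ?_, ?_⟩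
            · refine (mem_congr I hlo hhi (Or.inr (Or.inl ⟨?_, ?_⟩))).mp hmem
              · have := du_odd_big W hk hk1
                rw [du0]; omega
              · rw [dv5, dv0]; omega
            · intro m h1 h2
              have hm : m = 1 ∨ m = 2 ∨ m = 3 ∨ m = 4 := by omega
              rcases hm with rfl | rfl | rfl | rfl
              · exact (ihg hbg 1 1 (by unfold Rel; omega)).mp (hint 1 (by omega) (by omega))
              · exact (ihg hbg 2 2 (by unfold Rel; omega)).mp (hint 2 (by omega) (by omega))
              · exact (ihg hbg 1 3 (by unfold Rel; omega)).mp (hint 1 (by omega) (by omega))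
              · exact (ihg hbg 2 4 (by unfold Rel; omega)).mp (hint 2 (by omega) (by omega))
      · have hj0 : j ≠ 0 := fun hj => hi0 (hij.1.mpr hj)
        have hpar : i % 2 = j % 2 := hij.2
        rcases Nat.mod_two_eq_zero_or_one i with hi | hi
        · -- i, j are b-positions
          have hj : j % 2 = 0 := by omega
          rcases Nat.mod_two_eq_zero_or_one k with hk | hk
          · -- witness b-position, answer j+2
            have hk0 : k ≠ 0 := by omega
            refine ⟨j+2, by omega, (ihh hbh k (j+2) (by unfold Rel; omega)).mp hkh, ?_, ?_⟩
            · have e1 : du W k = 0 := duE W hk hk0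
              have e2 : du W i = 0 := duE W hi hi0
              have e3 : dv W (j+2) = 0 := dvE W (by omega) (by omega)
              have e4 : dv W j = 0 := dvE W hj hj0
              have hval : (dv W (j+2) : ℤ) - (dv W j : ℤ) = (du W k : ℤ) - (du W i : ℤ) := by
                rw [e1, e2, e3, e4]
              rw [hval]; exact hmem
            · intro m h1 h2
              have : m = j+1 := by omega
              subst this
              have hik2 : i + 1 < k := by omega
              exact (ihg hbg (i+1) (j+1) (by unfold Rel; omega)).mp (hint (i+1) (by omega) hik2)
          · -- witness c-position, answer j+1
            refine ⟨j+1, by omega, (ihh hbh k (j+1) (by unfold Rel; omega)).mp hkh, ?_, ?_⟩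
            · refine (mem_congr I hlo hhi (Or.inr (Or.inl ⟨?_, ?_⟩))).mp hmem
              · have h1 := du_odd_lb W hk
                have e2 : du W i = 0 := duE W hi hi0
                rw [e2]; omega
              · have h1 := dv_odd_lb W (show (j+1) % 2 = 1 by omega)
                have e2 : dv W j = 0 := dvE W hj hj0
                rw [e2]; omega
            · intro m h1 h2; exact absurd h2 (by omega)
        · -- i, j are c-positions
          have hj : j % 2 = 1 := by omega
          rcases Nat.mod_two_eq_zero_or_one k with hk | hk
          · -- witness b-position, answer j+1
            have hk0 : k ≠ 0 := by omega
            refine ⟨j+1, by omega, (ihh hbh k (j+1) (by unfold Rel; omega)).mp hkh, ?_, ?_⟩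
            · refine (mem_congr I hlo hhi (Or.inr (Or.inr ⟨?_, ?_⟩))).mp hmem
              · have h1 := du_odd_lb W hi
                have e2 : du W k = 0 := duE W hk hk0
                rw [e2]; omega
              · have h1 := dv_odd_lb W hj
                have e2 : dv W (j+1) = 0 := dvE W (by omega) (by omega)
                rw [e2]; omega
            · intro m h1 h2; exact absurd h2 (by omega)
          · -- witness c-position, answer j+2
            have hik2 : i + 2 ≤ k := by omega
            refine ⟨j+2, by omega, (ihh hbh k (j+2) (by unfold Rel; omega)).mp hkh, ?_, ?_⟩
            · refine (mem_congr I hlo hhi (Or.inr (Or.inl ⟨?_, ?_⟩))).mp hmem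
              · have h1 := du_odd_mono W hi hk hik
                omega
              · have h1 := dv_odd_mono W hj (show (j+2) % 2 = 1 by omega) (by omega)
                omega
            · intro m h1 h2
              have : m = j+1 := by omega
              subst this
              exact (ihg hbg (i+1) (j+1) (by unfold Rel; omega)).mp (hint (i+1) (by omega) (by omega))
    · rintro ⟨k, hjk, hkh, hmem, hint⟩
      by_cases hj0 : j = 0
      · have hi0 : i = 0 := hij.1.mpr hj0
        subst hi0; subst hj0
        rcases Nat.mod_two_eq_zero_or_one k with hk | hk
        · -- witness b-position, answer 2
          have hk0 : k ≠ 0 := by omega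
          refine ⟨2, by omega, (ihh hbh 2 k (by unfold Rel; omega)).mpr hkh, ?_, ?_⟩
          · have e1 : dv W k = 0 := dvE W hk hk0
            have e2 : du W 2 = 0 := duE W (by omega) (by omega)
            have hval : (du W 2 : ℤ) - (du W 0 : ℤ) = (dv W k : ℤ) - (dv W 0 : ℤ) := by
              rw [e1, e2, dv0, du0]
            rw [hval]; exact hmem
          · intro m h1 h2
            have : m = 1 := by omega
            subst this
            exact (ihg hbg 1 1 (by unfold Rel; omega)).mpr (hint 1 (by omega) (by omega))
        · rcases eq_or_ne k 1 with rfl | hk1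
          · refine ⟨1, by omega, (ihh hbh 1 1 (by unfold Rel; omega)).mpr hkh, ?_, ?_⟩
            · have hval : (du W 1 : ℤ) - (du W 0 : ℤ) = (dv W 1 : ℤ) - (dv W 0 : ℤ) := by
                rw [dv1, dv0, du1, du0]
              rw [hval]; exact hmem
            · intro m h1 h2; exact absurd h2 (by omega)
          · rcases eq_or_ne k 3 with rfl | hk3
            · -- v's special position, answer 1
              refine ⟨1, by omega, (ihh hbh 1 3 (by unfold Rel; omega)).mpr hkh, ?_, ?_⟩
              · refine (mem_congr I hlo hhi (Or.inr (Or.inr ⟨?_, ?_⟩))).mpr hmem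
                · rw [du1, du0]; omega
                · rw [dv3, dv0]; omega
              · intro m h1 h2; exact absurd h2 (by omega)
            · -- high c-position of v, answer 3
              have hk5 : 5 ≤ k := by omega
              refine ⟨3, by omega, (ihh hbh 3 k (by unfold Rel; omega)).mpr hkh, ?_, ?_⟩
              · refine (mem_congr I hlo hhi (Or.inr (Or.inl ⟨?_, ?_⟩))).mpr hmem
                · have e1 : du W 3 = 6*W := by
                    rw [duO W (by omega) (by omega)]
                  rw [e1, du0]; omega
                · have h1 := dv_odd_big W hk hk1 hk3
                  rw [dv0]; omega
              · intro m h1 h2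
                have hm : m = 1 ∨ m = 2 := by omega
                rcases hm with rfl | rfl
                · exact (ihg hbg 1 1 (by unfold Rel; omega)).mpr (hint 1 (by omega) (by omega))
                · exact (ihg hbg 2 2 (by unfold Rel; omega)).mpr (hint 2 (by omega) (by omega))
      · have hi0 : i ≠ 0 := fun hi => hj0 (hij.1.mp hi)
        have hpar : i % 2 = j % 2 := hij.2
        rcases Nat.mod_two_eq_zero_or_one j with hj | hj
        · -- b-positions
          have hi : i % 2 = 0 := by omega
          rcases Nat.mod_two_eq_zero_or_one k with hk | hk
          · -- witness b-position, answer i+2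
            have hk0 : k ≠ 0 := by omega
            refine ⟨i+2, by omega, (ihh hbh (i+2) k (by unfold Rel; omega)).mpr hkh, ?_, ?_⟩
            · have e1 : dv W k = 0 := dvE W hk hk0
              have e2 : dv W j = 0 := dvE W hj hj0
              have e3 : du W (i+2) = 0 := duE W (by omega) (by omega)
              have e4 : du W i = 0 := duE W hi hi0
              have hval : (du W (i+2) : ℤ) - (du W i : ℤ) = (dv W k : ℤ) - (dv W j : ℤ) := by
                rw [e1, e2, e3, e4]
              rw [hval]; exact hmem
            · intro m h1 h2
              have : m = i+1 := by omega
              subst this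
              exact (ihg hbg (i+1) (j+1) (by unfold Rel; omega)).mpr (hint (j+1) (by omega) (by omega))
          · -- witness c-position, answer i+1
            refine ⟨i+1, by omega, (ihh hbh (i+1) k (by unfold Rel; omega)).mpr hkh, ?_, ?_⟩
            · refine (mem_congr I hlo hhi (Or.inr (Or.inl ⟨?_, ?_⟩))).mpr hmem
              · have h1 := du_odd_lb W (show (i+1) % 2 = 1 by omega)
                have e2 : du W i = 0 := duE W hi hi0
                rw [e2]; omega
              · have h1 := dv_odd_lb W hk
                have e2 : dv W j = 0 := dvE W hj hj0
                rw [e2]; omega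
            · intro m h1 h2; exact absurd h2 (by omega)
        · -- c-positions
          have hi : i % 2 = 1 := by omega
          rcases Nat.mod_two_eq_zero_or_one k with hk | hk
          · -- witness b-position, answer i+1
            have hk0 : k ≠ 0 := by omega
            refine ⟨i+1, by omega, (ihh hbh (i+1) k (by unfold Rel; omega)).mpr hkh, ?_, ?_⟩
            · refine (mem_congr I hlo hhi (Or.inr (Or.inr ⟨?_, ?_⟩))).mpr hmem
              · have h1 := du_odd_lb W hi
                have e2 : du W (i+1) = 0 := duE W (by omega) (by omega)
                rw [e2]; omega
              · have h1 := dv_odd_lb W hj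
                have e2 : dv W k = 0 := dvE W hk hk0
                rw [e2]; omega
            · intro m h1 h2; exact absurd h2 (by omega)
          · -- witness c-position, answer i+2
            have hjk2 : j + 2 ≤ k := by omega
            refine ⟨i+2, by omega, (ihh hbh (i+2) k (by unfold Rel; omega)).mpr hkh, ?_, ?_⟩
            · refine (mem_congr I hlo hhi (Or.inr (Or.inl ⟨?_, ?_⟩))).mpr hmem
              · have h1 := du_odd_mono W hi (show (i+2) % 2 = 1 by omega) (by omega)
                omega
              · have h1 := dv_odd_mono W hj hk hjk
                omega
            · intro m h1 h2
              have : m = i+1 := by omega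
              subst this
              exact (ihg hbg (i+1) (j+1) (by unfold Rel; omega)).mpr (hint (j+1) (by omega) (by omega))

end ND
namespace ND

lemma univ_mem (z : ℤ) : Iv.univ.mem z := by
  unfold Iv.mem Iv.univ
  simp only [if_true]
  constructor
  · exact WithBot.bot_lt_coe _
  · show ((z : WithTop ℤ) : EIntB) < ((⊤ : WithTop ℤ) : EIntB)
    rw [WithBot.coe_lt_coe]
    exact WithTop.coe_lt_top z

lemma le2_mem (z : ℤ) : le2.mem z ↔ z ≤ 2 := by
  unfold Iv.mem le2
  simp only [if_true, Bool.false_eq_true, if_false]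
  constructor
  · rintro ⟨-, h⟩
    have : (z : WithTop ℤ) ≤ ((2:ℤ) : WithTop ℤ) := WithBot.coe_le_coe.mp h
    exact_mod_cast this
  · intro h
    exact ⟨WithBot.bot_lt_coe _, by
      show ((z : WithTop ℤ) : EIntB) ≤ (((2:ℤ) : WithTop ℤ) : EIntB)
      rw [WithBot.coe_le_coe]
      exact_mod_cast h⟩

lemma pw_true {j : ℕ} (h : true ∈ pw j) : j ≠ 0 ∧ j % 2 = 0 := by
  unfold pw at h
  rcases eq_or_ne j 0 with rfl | h0
  · simp at h
  · rcases Nat.mod_two_eq_zero_or_one j with hj | hj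
    · exact ⟨h0, hj⟩
    · simp [h0, hj] at h

lemma pw_false {k : ℕ} (h : false ∈ pw k) : k % 2 = 1 := by
  unfold pw at h
  rcases eq_or_ne k 0 with rfl | h0
  · simp at h
  · rcases Nat.mod_two_eq_zero_or_one k with hk | hk
    · simp [h0, hk] at h
    · exact hk

lemma tptl_v (W : ℕ) : TPTL.models (vv W) xFbFc := by
  unfold TPTL.models xFbFc Fu
  simp only [TPTL.sat]
  refine ⟨2, by omega, ⟨?_, 3, by omega, ⟨?_, ?_⟩, ?_⟩, ?_⟩
  · show true ∈ pw 2
    simp [pw]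
  · show false ∈ pw 3
    simp [pw]
  · show le2.mem _
    simp only [Function.update_self]
    rw [le2_mem]
    show (↑(dv W 3) : ℤ) - (↑(dv W 0) : ℤ) ≤ 2
    rw [dv3, dv0]
    push_cast
    omega
  · intro k h1 h2; omega
  · intro k h1 h2
    exact univ_mem _

lemma tptl_u (W : ℕ) (hW : 2 ≤ W) : ¬ TPTL.models (uu W) xFbFc := by
  unfold TPTL.models xFbFc Fu
  simp only [TPTL.sat]
  rintro ⟨j, hj, ⟨hbj, k, hk, ⟨hck, hcstr⟩, -⟩, -⟩
  have hjc : j ≠ 0 ∧ j % 2 = 0 := pw_true hbj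
  have hkc : k % 2 = 1 := pw_false hck
  have hk1 : k ≠ 1 := by omega
  have h6 : 6*W ≤ du W k := du_odd_big W hkc hk1
  simp only [Function.update_self, uu] at hcstr
  rw [le2_mem] at hcstr
  have : (↑(du W k) : ℤ) - (↑(du W 0) : ℤ) ≤ 2 := hcstr
  rw [du0] at this
  push_cast at this
  omega

end ND

/-- The TPTL formula `x.F (b ∧ F (c ∧ x ≤ 2))` is not definable in MTL. -/
theorem xFbFc_not_mtl_definable :
    ¬ ∃ φ : MTL Bool, ∀ w : DataWord Bool,
      MTL.models w φ ↔ TPTL.models w xFbFc := by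
  rintro ⟨φ, hφ⟩
  set B := ND.mbnd φ with hB
  set W := B + 3 with hWdef
  have hWB : B < W := by omega
  have hiff := ND.key B W hWB φ (le_refl _) 0 0 ⟨Iff.rfl, rfl⟩
  have h1 : TPTL.models (ND.vv W) xFbFc := ND.tptl_v W
  have h2 : ¬ TPTL.models (ND.uu W) xFbFc := ND.tptl_u W (by omega)
  have h3 : MTL.models (ND.vv W) φ := (hφ _).mpr h1
  have h4 : MTL.models (ND.uu W) φ := hiff.mpr h3
  exact h2 ((hφ _).mp h4)
end

section
/- MTL and TPTL^eq are incomparable in expressive power: the TPTL^eq formula x.F F F (x = 0) is not MTL-definable, and the MTL formula F_{=1} true is not TPTL^eq-definable. -/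
/-- A TPTL truth constant over `Bool` (using no register constraints). -/
def ttB : TPTL Bool ℕ := .neg (.and (.atom true) (.neg (.atom true)))

/-- The eventually operator `F φ := true U φ` (strict). -/
def FB (φ : TPTL Bool ℕ) : TPTL Bool ℕ := .untl ttB φ

/-- The `TPTL^eq` formula `x.F F F (x = 0)`. -/
def xFFFB : TPTL Bool ℕ :=
  .freeze 0 (FB (FB (FB (.cstr 0 (Iv.pt 0)))))

/-- An MTL truth constant over `Bool`. -/
def mttB : MTL Bool := .neg (.and (.atom true) (.neg (.atom true)))

/-- The MTL formula `F_{=1} true`. -/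
def Feq1 : MTL Bool := .untl mttB (Iv.pt 1) mttB

/-! ### Auxiliary development -/

section Aux

/-- Two integers have the same "type" relative to bound `M`: equal, both huge
positive, or both huge negative. -/
def sameType (M : ℕ) (v v' : ℤ) : Prop :=
  v = v' ∨ ((M : ℤ) < v ∧ (M : ℤ) < v') ∨ (v < -(M : ℤ) ∧ v' < -(M : ℤ))

lemma sameType_mono {M M' : ℕ} (h : M ≤ M') {v v' : ℤ} (hs : sameType M' v v') :
    sameType M v v' := by
  rcases hs with h1 | ⟨h1, h2⟩ | ⟨h1, h2⟩
  · exact Or.inl h1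
  · exact Or.inr (Or.inl ⟨by omega, by omega⟩)
  · exact Or.inr (Or.inr ⟨by omega, by omega⟩)

/-- An interval is `M`-good if membership only depends on the `M`-type. -/
def Iv.goodFor (M : ℕ) (I : Iv) : Prop :=
  ∀ v v' : ℤ, sameType M v v' → (I.mem v ↔ I.mem v')

lemma EIntB.ofInt_lt_ofInt {a b : ℤ} : EIntB.ofInt a < EIntB.ofInt b ↔ a < b := by
  simp [EIntB.ofInt]

lemma EIntB.ofInt_le_ofInt {a b : ℤ} : EIntB.ofInt a ≤ EIntB.ofInt b ↔ a ≤ b := by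
  simp [EIntB.ofInt]

lemma endpoint_good (e : EIntB) : ∃ M : ℕ, ∀ v v' : ℤ, sameType M v v' →
    ((e < EIntB.ofInt v ↔ e < EIntB.ofInt v') ∧ (e ≤ EIntB.ofInt v ↔ e ≤ EIntB.ofInt v') ∧
     (EIntB.ofInt v < e ↔ EIntB.ofInt v' < e) ∧ (EIntB.ofInt v ≤ e ↔ EIntB.ofInt v' ≤ e)) := by
  induction e using WithBot.recBotCoe with
  | bot =>
      refine ⟨0, fun v v' _ => ?_⟩
      simp [EIntB.ofInt]
  | coe t =>
      induction t using WithTop.recTopCoe with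
      | top =>
          refine ⟨0, fun v v' _ => ⟨?_, ?_, ?_, ?_⟩⟩
          · simp [EIntB.ofInt, WithBot.coe_lt_coe]
          · simp [EIntB.ofInt, WithBot.coe_le_coe]
          · exact iff_of_true (WithBot.coe_lt_coe.mpr (WithTop.coe_lt_top v))
              (WithBot.coe_lt_coe.mpr (WithTop.coe_lt_top v'))
          · simp [EIntB.ofInt, WithBot.coe_le_coe]
      | coe n =>
          refine ⟨n.natAbs, fun v v' hs => ?_⟩
          have h1 : ((n : WithTop ℤ) : EIntB) < EIntB.ofInt v ↔ n < v := by
            simp [EIntB.ofInt]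
          have h2 : ((n : WithTop ℤ) : EIntB) ≤ EIntB.ofInt v ↔ n ≤ v := by
            simp [EIntB.ofInt]
          have h3 : EIntB.ofInt v < ((n : WithTop ℤ) : EIntB) ↔ v < n := by
            simp [EIntB.ofInt]
          have h4 : EIntB.ofInt v ≤ ((n : WithTop ℤ) : EIntB) ↔ v ≤ n := by
            simp [EIntB.ofInt]
          have h1' : ((n : WithTop ℤ) : EIntB) < EIntB.ofInt v' ↔ n < v' := by
            simp [EIntB.ofInt]
          have h2' : ((n : WithTop ℤ) : EIntB) ≤ EIntB.ofInt v' ↔ n ≤ v' := by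
            simp [EIntB.ofInt]
          have h3' : EIntB.ofInt v' < ((n : WithTop ℤ) : EIntB) ↔ v' < n := by
            simp [EIntB.ofInt]
          have h4' : EIntB.ofInt v' ≤ ((n : WithTop ℤ) : EIntB) ↔ v' ≤ n := by
            simp [EIntB.ofInt]
          rw [h1, h2, h3, h4, h1', h2', h3', h4']
          rcases hs with h | ⟨ha, hb⟩ | ⟨ha, hb⟩ <;>
            refine ⟨?_, ?_, ?_, ?_⟩ <;> omega

lemma Iv.goodFor_mono {M M' : ℕ} (h : M ≤ M') {I : Iv} (hg : I.goodFor M) :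
    I.goodFor M' := fun v v' hs => hg v v' (sameType_mono h hs)

lemma Iv.good_exists (I : Iv) : ∃ M, I.goodFor M := by
  obtain ⟨M1, h1⟩ := endpoint_good I.lo
  obtain ⟨M2, h2⟩ := endpoint_good I.hi
  refine ⟨max M1 M2, fun v v' hs => ?_⟩
  have hs1 := sameType_mono (le_max_left M1 M2) hs
  have hs2 := sameType_mono (le_max_right M1 M2) hs
  obtain ⟨a1, a2, a3, a4⟩ := h1 v v' hs1
  obtain ⟨b1, b2, b3, b4⟩ := h2 v v' hs2
  cases hlo : I.loOpen <;> cases hhi : I.hiOpen <;>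
    simp only [Iv.mem, hlo, hhi, Bool.false_eq_true, eq_self_iff_true, if_true, if_false] <;>
    first
      | rw [a2, b4]
      | rw [a2, b3]
      | rw [a1, b4]
      | rw [a1, b3]

/-- All intervals occurring in an MTL formula are `M`-good. -/
def MTL.good {P : Type} (M : ℕ) : MTL P → Prop
  | .atom _ => True
  | .neg φ => φ.good M
  | .and φ ψ => φ.good M ∧ ψ.good M
  | .untl φ I ψ => I.goodFor M ∧ φ.good M ∧ ψ.good M

lemma MTL.good_mono {P : Type} {M M' : ℕ} (h : M ≤ M') :
    ∀ φ : MTL P, φ.good M → φ.good M'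
  | .atom _, _ => trivial
  | .neg φ, hg => MTL.good_mono h φ hg
  | .and φ ψ, hg => ⟨MTL.good_mono h φ hg.1, MTL.good_mono h ψ hg.2⟩
  | .untl φ I ψ, hg =>
      ⟨Iv.goodFor_mono h hg.1, MTL.good_mono h φ hg.2.1, MTL.good_mono h ψ hg.2.2⟩

lemma MTL.good_exists {P : Type} : ∀ φ : MTL P, ∃ M, φ.good M
  | .atom _ => ⟨0, trivial⟩
  | .neg φ => MTL.good_exists φ
  | .and φ ψ => by
      obtain ⟨M1, h1⟩ := MTL.good_exists φ
      obtain ⟨M2, h2⟩ := MTL.good_exists ψ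
      exact ⟨max M1 M2, MTL.good_mono (le_max_left _ _) φ h1,
        MTL.good_mono (le_max_right _ _) ψ h2⟩
  | .untl φ I ψ => by
      obtain ⟨M1, h1⟩ := MTL.good_exists φ
      obtain ⟨M2, h2⟩ := MTL.good_exists ψ
      obtain ⟨M3, h3⟩ := Iv.good_exists I
      refine ⟨max M3 (max M1 M2), ?_, ?_, ?_⟩
      · exact Iv.goodFor_mono (le_max_left _ _) h3
      · exact MTL.good_mono (le_trans (le_max_left _ _) (le_max_right _ _)) φ h1
      · exact MTL.good_mono (le_trans (le_max_right _ _) (le_max_right _ _)) ψ h2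

/-- The key transfer lemma: a back-and-forth relation between positions of two
data words that respects propositions and `M`-types of data differences makes
the words indistinguishable by `M`-good MTL formulas. -/
theorem mtl_transfer {P : Type} (w w' : DataWord P) (M : ℕ) (R : ℕ → ℕ → Prop)
    (hprop : ∀ i i', R i i' → (w i).1 = (w' i').1)
    (hforth : ∀ i i', R i i' → ∀ j, i < j → ∃ j', i' < j' ∧ R j j' ∧
        sameType M (((w j).2 : ℤ) - ((w i).2 : ℤ)) (((w' j').2 : ℤ) - ((w' i').2 : ℤ)) ∧
        ∀ k', i' < k' → k' < j' → ∃ k, i < k ∧ k < j ∧ R k k')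
    (hback : ∀ i i', R i i' → ∀ j', i' < j' → ∃ j, i < j ∧ R j j' ∧
        sameType M (((w j).2 : ℤ) - ((w i).2 : ℤ)) (((w' j').2 : ℤ) - ((w' i').2 : ℤ)) ∧
        ∀ k, i < k → k < j → ∃ k', i' < k' ∧ k' < j' ∧ R k k') :
    ∀ φ : MTL P, φ.good M → ∀ i i', R i i' → (MTL.sat w i φ ↔ MTL.sat w' i' φ) := by
  intro φ
  induction φ with
  | atom p =>
      intro _ i i' h
      simp only [MTL.sat, hprop i i' h]
  | neg φ ih =>
      intro hg i i' h
      simp only [MTL.sat]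
      rw [ih hg i i' h]
  | and φ ψ ih1 ih2 =>
      intro hg i i' h
      simp only [MTL.sat]
      rw [ih1 hg.1 i i' h, ih2 hg.2 i i' h]
  | untl φ I ψ ih1 ih2 =>
      intro hg i i' h
      obtain ⟨hI, hgφ, hgψ⟩ := hg
      constructor
      · rintro ⟨j, hij, hsψ, hmem, hfill⟩
        obtain ⟨j', hij', hR, hst, hint⟩ := hforth i i' h j hij
        refine ⟨j', hij', (ih2 hgψ j j' hR).1 hsψ, (hI _ _ hst).1 hmem, ?_⟩
        intro k' h1 h2
        obtain ⟨k, hk1, hk2, hRk⟩ := hint k' h1 h2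
        exact (ih1 hgφ k k' hRk).1 (hfill k hk1 hk2)
      · rintro ⟨j', hij', hsψ, hmem, hfill⟩
        obtain ⟨j, hij, hR, hst, hint⟩ := hback i i' h j' hij'
        refine ⟨j, hij, (ih2 hgψ j j' hR).2 hsψ, (hI _ _ hst).2 hmem, ?_⟩
        intro k h1 h2
        obtain ⟨k', hk1, hk2, hRk⟩ := hint k h1 h2
        exact (ih1 hgφ k k' hRk).2 (hfill k' hk1 hk2)

/-! ### Characterization of `xFFFB` -/

lemma ttB_sat (w : DataWord Bool) (i : ℕ) (ν : ℕ → ℕ) : TPTL.sat w i ν ttB := by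
  simp [ttB, TPTL.sat]

lemma mttB_sat (w : DataWord Bool) (i : ℕ) : MTL.sat w i mttB := by
  simp [mttB, MTL.sat]

lemma pt_mem (n v : ℤ) : (Iv.pt n).mem v ↔ v = n := by
  simp only [Iv.pt, Iv.mem, if_neg Bool.false_ne_true, EIntB.ofInt_le_ofInt]
  omega

lemma xFFFB_iff (w : DataWord Bool) :
    TPTL.models w xFFFB ↔ ∃ j, 3 ≤ j ∧ (w j).2 = (w 0).2 := by
  have hup : (Function.update (fun _ : ℕ => (w 0).2) 0 (w 0).2) 0 = (w 0).2 :=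
    Function.update_self _ _ _
  constructor
  · rintro ⟨j1, h1, ⟨j2, h2, ⟨j3, h3, hc, _⟩, _⟩, _⟩
    simp only [TPTL.sat, hup, pt_mem] at hc
    exact ⟨j3, by omega, by omega⟩
  · rintro ⟨j, hj, hd⟩
    refine ⟨1, by omega, ⟨2, by omega, ⟨j, by omega, ?_, ?_⟩, ?_⟩, ?_⟩
    · simp only [TPTL.sat, hup, pt_mem]
      omega
    · intro k _ _; exact ttB_sat _ _ _
    · intro k _ _; exact ttB_sat _ _ _
    · intro k _ _; exact ttB_sat _ _ _

/-! ### Part 1: the two indistinguishable words -/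

def dA (K : ℕ) : ℕ → ℕ
  | 0 => 2*K
  | 1 => 0
  | 2 => K
  | 3 => 2*K
  | (n+4) => (n+4)*K

def dB (K : ℕ) : ℕ → ℕ
  | 0 => 2*K
  | 1 => 0
  | 2 => 2*K
  | (n+3) => (n+4)*K

def wA (K : ℕ) : DataWord Bool := fun i => (∅, dA K i)
def wB (K : ℕ) : DataWord Bool := fun i => (∅, dB K i)

lemma dA_step (K i : ℕ) (hi : 1 ≤ i) : dA K i + K ≤ dA K (i+1) := by
  match i with
  | 1 => simp [dA]
  | 2 => show K + K ≤ 2*K; omega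
  | 3 => show 2*K + K ≤ (0+4)*K; omega
  | (n+4) => show (n+4)*K + K ≤ (n+5)*K; have : (n+5)*K = (n+4)*K + K := by ring
             omega

lemma dB_step (K i : ℕ) (hi : 1 ≤ i) : dB K i + K ≤ dB K (i+1) := by
  match i with
  | 1 => show 0 + K ≤ 2*K; omega
  | 2 => show 2*K + K ≤ (0+4)*K; omega
  | (n+3) => show (n+4)*K + K ≤ (n+5)*K; have : (n+5)*K = (n+4)*K + K := by ring
             omega

lemma dA_gap (K : ℕ) : ∀ i j, 1 ≤ i → i < j → dA K i + K ≤ dA K j := by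
  intro i j hi hij
  induction j with
  | zero => omega
  | succ m ih =>
      rcases Nat.lt_succ_iff_lt_or_eq.mp hij with h | h
      · have h1 := ih h
        have h2 := dA_step K m (by omega)
        omega
      · subst h; exact dA_step K i hi

lemma dB_gap (K : ℕ) : ∀ i j, 1 ≤ i → i < j → dB K i + K ≤ dB K j := by
  intro i j hi hij
  induction j with
  | zero => omega
  | succ m ih =>
      rcases Nat.lt_succ_iff_lt_or_eq.mp hij with h | h
      · have h1 := ih h
        have h2 := dB_step K m (by omega)
        omega
      · subst h; exact dB_step K i hi

/-- The back-and-forth relation between positions of `wA` and `wB`. -/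
def BRel : ℕ → ℕ → Prop := fun i i' => (i = 0 ∧ i' = 0) ∨ (1 ≤ i ∧ 1 ≤ i')

lemma part1 :
    ¬ ∃ φ : MTL Bool, ∀ w : DataWord Bool, MTL.models w φ ↔ TPTL.models w xFFFB := by
  rintro ⟨φ, hφ⟩
  obtain ⟨M, hg⟩ := MTL.good_exists φ
  set K := M + 1 with hK
  have hprop : ∀ i i', BRel i i' → ((wA K i).1 = (wB K i').1) := fun _ _ _ => rfl
  have hforth : ∀ i i', BRel i i' → ∀ j, i < j → ∃ j', i' < j' ∧ BRel j j' ∧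
      sameType M (((wA K j).2 : ℤ) - ((wA K i).2 : ℤ))
        (((wB K j').2 : ℤ) - ((wB K i').2 : ℤ)) ∧
      ∀ k', i' < k' → k' < j' → ∃ k, i < k ∧ k < j ∧ BRel k k' := by
    rintro i i' (⟨rfl, rfl⟩ | ⟨hi, hi'⟩) j hij
    · rcases Nat.lt_or_ge j 4 with h4 | h4
      · interval_cases j
        · -- j = 1 ↦ j' = 1
          refine ⟨1, one_pos, Or.inr ⟨le_refl 1, le_refl 1⟩, ?_, ?_⟩
          · exact Or.inl rfl
          · intro k' h1 h2; omega
        · -- j = 2 ↦ j' = 1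
          refine ⟨1, one_pos, Or.inr ⟨by omega, le_refl 1⟩, ?_, ?_⟩
          · refine Or.inr (Or.inr ⟨?_, ?_⟩)
            · show ((K : ℤ)) - (2*K : ℕ) < -(M:ℤ)
              push_cast; omega
            · show ((0 : ℕ) : ℤ) - (2*K : ℕ) < -(M:ℤ)
              push_cast; omega
          · intro k' h1 h2; omega
        · -- j = 3 ↦ j' = 2
          refine ⟨2, by omega, Or.inr ⟨by omega, by omega⟩, Or.inl rfl, ?_⟩
          intro k' h1 h2
          exact ⟨1, by omega, by omega, Or.inr ⟨le_refl 1, by omega⟩⟩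
      · -- j = n + 4 ↦ j' = 3
        obtain ⟨n, rfl⟩ : ∃ n, j = n + 4 := ⟨j - 4, by omega⟩
        refine ⟨3, by omega, Or.inr ⟨by omega, by omega⟩, ?_, ?_⟩
        · refine Or.inr (Or.inl ⟨?_, ?_⟩)
          · show (M:ℤ) < ((n+4)*K : ℕ) - (2*K : ℕ)
            have h5 : 4*K ≤ (n+4)*K := Nat.mul_le_mul_right _ (by omega)
            omega
          · show (M:ℤ) < ((0+4)*K : ℕ) - (2*K : ℕ)
            push_cast; omega
        · intro k' h1 h2
          exact ⟨1, by omega, by omega, Or.inr ⟨le_refl 1, by omega⟩⟩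
    · -- i, i' ≥ 1 : j ↦ i'+1
      refine ⟨i'+1, by omega, Or.inr ⟨by omega, by omega⟩, ?_, ?_⟩
      · refine Or.inr (Or.inl ⟨?_, ?_⟩)
        · have := dA_gap K i j hi hij
          show (M:ℤ) < (dA K j : ℤ) - (dA K i : ℤ)
          push_cast at this ⊢; omega
        · have := dB_gap K i' (i'+1) hi' (by omega)
          show (M:ℤ) < (dB K (i'+1) : ℤ) - (dB K i' : ℤ)
          push_cast at this ⊢; omega
      · intro k' h1 h2; omega
  have hback : ∀ i i', BRel i i' → ∀ j', i' < j' → ∃ j, i < j ∧ BRel j j' ∧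
      sameType M (((wA K j).2 : ℤ) - ((wA K i).2 : ℤ))
        (((wB K j').2 : ℤ) - ((wB K i').2 : ℤ)) ∧
      ∀ k, i < k → k < j → ∃ k', i' < k' ∧ k' < j' ∧ BRel k k' := by
    rintro i i' (⟨rfl, rfl⟩ | ⟨hi, hi'⟩) j' hij'
    · rcases Nat.lt_or_ge j' 3 with h3 | h3
      · interval_cases j'
        · -- j' = 1 ↦ j = 1
          refine ⟨1, one_pos, Or.inr ⟨le_refl 1, le_refl 1⟩, Or.inl rfl, ?_⟩
          intro k h1 h2; omega
        · -- j' = 2 ↦ j = 3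
          refine ⟨3, by omega, Or.inr ⟨by omega, by omega⟩, Or.inl rfl, ?_⟩
          intro k h1 h2
          exact ⟨1, by omega, by omega, Or.inr ⟨by omega, le_refl 1⟩⟩
      · -- j' = n + 3 ↦ j = 4
        obtain ⟨n, rfl⟩ : ∃ n, j' = n + 3 := ⟨j' - 3, by omega⟩
        refine ⟨4, by omega, Or.inr ⟨by omega, by omega⟩, ?_, ?_⟩
        · refine Or.inr (Or.inl ⟨?_, ?_⟩)
          · show (M:ℤ) < ((0+4)*K : ℕ) - (2*K : ℕ)
            push_cast; omega
          · show (M:ℤ) < ((n+4)*K : ℕ) - (2*K : ℕ)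
            have h5 : 4*K ≤ (n+4)*K := Nat.mul_le_mul_right _ (by omega)
            omega
        · intro k h1 h2
          exact ⟨1, by omega, by omega, Or.inr ⟨by omega, le_refl 1⟩⟩
    · -- i, i' ≥ 1 : j' ↦ i+1
      refine ⟨i+1, by omega, Or.inr ⟨by omega, by omega⟩, ?_, ?_⟩
      · refine Or.inr (Or.inl ⟨?_, ?_⟩)
        · have := dA_gap K i (i+1) hi (by omega)
          show (M:ℤ) < (dA K (i+1) : ℤ) - (dA K i : ℤ)
          push_cast at this ⊢; omega
        · have := dB_gap K i' j' hi' hij'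
          show (M:ℤ) < (dB K j' : ℤ) - (dB K i' : ℤ)
          push_cast at this ⊢; omega
      · intro k h1 h2; omega
  have htrans := mtl_transfer (wA K) (wB K) M BRel hprop hforth hback φ hg 0 0
    (Or.inl ⟨rfl, rfl⟩)
  have hA : TPTL.models (wA K) xFFFB := (xFFFB_iff _).2 ⟨3, by omega, rfl⟩
  have hB : ¬ TPTL.models (wB K) xFFFB := by
    rw [xFFFB_iff]
    rintro ⟨j, hj, hd⟩
    obtain ⟨n, rfl⟩ : ∃ n, j = n + 3 := ⟨j - 3, by omega⟩
    have h5 : 4*K ≤ (n+4)*K := Nat.mul_le_mul_right _ (by omega)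
    have hd' : (n+4)*K = 2*K := hd
    omega
  have hP : MTL.models (wA K) φ := (hφ (wA K)).2 hA
  have hQ : MTL.models (wB K) φ := htrans.1 hP
  exact hB ((hφ (wB K)).1 hQ)

/-! ### Part 2: injective renaming of data values -/

lemma tptl_map {P V : Type} [DecidableEq V] (f : ℕ → ℕ) (hf : Function.Injective f)
    (w : DataWord P) :
    ∀ (φ : TPTL P V), φ.eqOnly → ∀ i (ν : V → ℕ),
      (TPTL.sat w i ν φ ↔
        TPTL.sat (fun n => ((w n).1, f (w n).2)) i (fun x => f (ν x)) φ) := by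
  intro φ
  induction φ with
  | atom p => intro _ i ν; simp [TPTL.sat]
  | cstr x I =>
      intro hI i ν
      have hI' : I = Iv.pt 0 := hI
      subst hI'
      simp only [TPTL.sat, pt_mem, sub_eq_zero, Nat.cast_inj]
      exact ⟨fun h => h ▸ rfl, fun h => hf h⟩
  | neg φ ih =>
      intro h i ν
      simp only [TPTL.sat]
      rw [ih h i ν]
  | and φ ψ ih1 ih2 =>
      intro h i ν
      simp only [TPTL.sat]
      rw [ih1 h.1 i ν, ih2 h.2 i ν]
  | untl φ ψ ih1 ih2 =>
      intro h i ν
      simp only [TPTL.sat]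
      constructor
      · rintro ⟨j, hij, hs, hfill⟩
        exact ⟨j, hij, (ih2 h.2 j ν).1 hs, fun k h1 h2 => (ih1 h.1 k ν).1 (hfill k h1 h2)⟩
      · rintro ⟨j, hij, hs, hfill⟩
        exact ⟨j, hij, (ih2 h.2 j ν).2 hs, fun k h1 h2 => (ih1 h.1 k ν).2 (hfill k h1 h2)⟩
  | freeze x φ ih =>
      intro h i ν
      simp only [TPTL.sat]
      have e : (fun y => f (Function.update ν x (w i).2 y)) =
          Function.update (fun y => f (ν y)) x (f (w i).2) := by
        funext y
        by_cases hy : y = x <;> simp [Function.update_apply, hy]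
      rw [ih h i (Function.update ν x (w i).2), e]

lemma part2 :
    ¬ ∃ ψ : TPTL Bool ℕ, TPTL.eqOnly ψ ∧
        ∀ w : DataWord Bool, TPTL.models w ψ ↔ MTL.models w Feq1 := by
  rintro ⟨ψ, heq, hψ⟩
  set wP : DataWord Bool := (fun n => (∅, n)) with hwP
  have hf : Function.Injective (fun n : ℕ => 2*n) := fun a b h => by
    simp only at h; omega
  have hP : MTL.models wP Feq1 := by
    refine ⟨1, one_pos, mttB_sat _ _, ?_, fun k h1 h2 => absurd h2 (by omega)⟩
    rw [pt_mem]
    show ((1:ℕ):ℤ) - ((0:ℕ):ℤ) = 1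
    norm_num
  have h1 : TPTL.models wP ψ := (hψ wP).2 hP
  have h2 : TPTL.models (fun n => ((wP n).1, 2*(wP n).2)) ψ := by
    have := (tptl_map (fun n : ℕ => 2*n) hf wP ψ heq 0 (fun _ => (wP 0).2)).1 h1
    exact this
  have h3 : MTL.models (fun n => ((wP n).1, 2*(wP n).2)) Feq1 := (hψ _).1 h2
  obtain ⟨j, hj, _, hmem, _⟩ := h3
  rw [pt_mem] at hmem
  have hmem' : ((2*j : ℕ) : ℤ) - ((2*0 : ℕ) : ℤ) = 1 := hmem
  push_cast at hmem'
  omega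

end Aux

/-- MTL and `TPTL^eq` are incomparable: the `TPTL^eq` formula
`x.F F F (x = 0)` is not MTL-definable, and the MTL formula `F_{=1} true` is
not `TPTL^eq`-definable. -/
theorem mtl_tptleq_incomparable :
    TPTL.eqOnly xFFFB ∧
    (¬ ∃ φ : MTL Bool,
        ∀ w : DataWord Bool, MTL.models w φ ↔ TPTL.models w xFFFB) ∧
    (¬ ∃ ψ : TPTL Bool ℕ, TPTL.eqOnly ψ ∧
        ∀ w : DataWord Bool, TPTL.models w ψ ↔ MTL.models w Feq1) := by
  refine ⟨?_, part1, part2⟩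
  simp [xFFFB, FB, ttB, TPTL.eqOnly]
end
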